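/- Consider the 4-state MDP of Figure 2 with parameters T ≥ 1 and ε > 0: states 1,2 form a deterministic 2-cycle with rewards 1/2 on each transition (actions 'down' at 1, left-to-1 at 2); action 'right' at state 1 moves to state 3 with reward 0; action 'left' at state 4 moves to state 2 with reward 0; the unique action at state 3 gives reward 1/2, staying at 3 with probability 1−1/T and moving to 4 with probability 1/T; action 'up' at state 4 gives reward 1/2+ε, staying at 4 with probability 1−1/T and moving to 3 with probability 1/T. Then the unique gain-optimal policy π_RU has constant gain (1+ε)/2 and its bias satisfies span(h^⋆) = εT/2 + ε + 1/2, while the policy π_DL has constant gain 1/2 = ρ^⋆ − ε/2 and bias span span(h^{π_DL}) = 1/2. -/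
import Mathlib


open Matrix

/-- The span seminorm on ℝ^{Fin 4}. -/
noncomputable def spanSem (x : Fin 4 → ℝ) : ℝ := (⨆ s, x s) - ⨅ s, x s

/-- Transition matrix of the stationary policy taking action 'right' at state 1
with probability p and action 'up' at state 4 with probability q, in the 4-state
MDP of Figure 2 (states 1,2,3,4 are indices 0,1,2,3). -/
noncomputable def Pmat (T p q : ℝ) : Matrix (Fin 4) (Fin 4) ℝ :=
  !![0, 1 - p, p, 0;
     1, 0, 0, 0;
     0, 0, 1 - 1 / T, 1 / T;
     0, 1 - q, q * (1 / T), q * (1 - 1 / T)]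

/-- Reward vector: 'down' at state 1 gives 1/2, 'right' gives 0; state 2 gives
1/2; state 3 gives 1/2; 'up' at state 4 gives 1/2+ε, 'left' gives 0. -/
noncomputable def rvec (ε p q : ℝ) : Fin 4 → ℝ :=
  ![(1 - p) * (1 / 2), 1 / 2, 1 / 2, q * (1 / 2 + ε)]

lemma span4 (x : Fin 4 → ℝ) (i j : Fin 4) (hmax : ∀ s, x s ≤ x i)
    (hmin : ∀ s, x j ≤ x s) : spanSem x = x i - x j := by
  unfold spanSem
  have h1 : (⨆ s, x s) = x i :=
    le_antisymm (ciSup_le hmax) (le_ciSup (Set.finite_range x).bddAbove i)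
  have h2 : (⨅ s, x s) = x j :=
    le_antisymm (ciInf_le (Set.finite_range x).bddBelow j) (le_ciInf hmin)
  rw [h1, h2]

set_option maxHeartbeats 1000000 in
/-- In the 4-state MDP of Figure 2: the unique gain-optimal deterministic policy
is π_RU (p = q = 1), with constant gain (1+ε)/2 and bias span εT/2 + ε + 1/2,
while π_DL (p = q = 0) has constant gain (1+ε)/2 − ε/2 = 1/2 and bias span 1/2.
Gain and bias are characterized by P_π ρ = ρ, ρ + h = r_π + P_π h, together with
the normalization P_π^∞ h = 0 (which amounts to h(3)+h(4) = 0 for π_RU and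
h(1)+h(2) = 0 for π_DL, where the recurrent classes carry uniform stationary
distributions). -/
theorem stmt19 (T ε : ℝ) (hT : 1 ≤ T) (hε : 0 < ε) :
    -- π_RU is the unique gain-optimal deterministic policy
    (∀ p q : ℝ, (p = 0 ∨ p = 1) → (q = 0 ∨ q = 1) → ∀ ρ h : Fin 4 → ℝ,
      Pmat T p q *ᵥ ρ = ρ → ρ + h = rvec ε p q + Pmat T p q *ᵥ h →
      ρ = (fun _ => (1 + ε) / 2) → p = 1 ∧ q = 1) ∧
    -- gain and bias span of π_RU
    (∀ ρ h : Fin 4 → ℝ,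
      Pmat T 1 1 *ᵥ ρ = ρ → ρ + h = rvec ε 1 1 + Pmat T 1 1 *ᵥ h →
      h 2 + h 3 = 0 →
      ρ = (fun _ => (1 + ε) / 2) ∧ spanSem h = ε * T / 2 + ε + 1 / 2) ∧
    -- gain and bias span of π_DL: its gain is ρ⋆ − ε/2 and its bias span is 1/2
    (∀ ρ h : Fin 4 → ℝ,
      Pmat T 0 0 *ᵥ ρ = ρ → ρ + h = rvec ε 0 0 + Pmat T 0 0 *ᵥ h →
      h 0 + h 1 = 0 →
      ρ = (fun _ => (1 + ε) / 2 - ε / 2) ∧ spanSem h = 1 / 2) := by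
  have hT0 : T ≠ 0 := by linarith
  have hfin : ∀ s : Fin 4, s = 0 ∨ s = 1 ∨ s = 2 ∨ s = 3 := by decide
  have hTpos : (0:ℝ) < T := by linarith
  refine ⟨?_, ?_, ?_⟩
  · -- uniqueness
    rintro p q (rfl | rfl) (rfl | rfl) ρ h hP hB hρ
    · -- p = 0, q = 0
      exfalso
      have b0 := congrFun hB 0
      have b1 := congrFun hB 1
      have hρ0 := congrFun hρ 0
      have hρ1 := congrFun hρ 1
      simp [Pmat, rvec, mulVec, dotProduct, Fin.sum_univ_four] at b0 b1 hρ0 hρ1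
      linarith
    · -- p = 0, q = 1
      exfalso
      have b0 := congrFun hB 0
      have b1 := congrFun hB 1
      have hρ0 := congrFun hρ 0
      have hρ1 := congrFun hρ 1
      simp [Pmat, rvec, mulVec, dotProduct, Fin.sum_univ_four] at b0 b1 hρ0 hρ1
      linarith
    · -- p = 1, q = 0
      exfalso
      have b0 := congrFun hB 0
      have b1 := congrFun hB 1
      have b2 := congrFun hB 2
      have b3 := congrFun hB 3
      have hρ0 := congrFun hρ 0
      have hρ1 := congrFun hρ 1
      have hρ2 := congrFun hρ 2
      have hρ3 := congrFun hρ 3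
      simp [Pmat, rvec, mulVec, dotProduct, Fin.sum_univ_four] at b0 b1 b2 b3 hρ0 hρ1 hρ2 hρ3
      -- b2 : ρ 2 + h 2 = 1/2 + ((1 - T⁻¹) * h 2 + T⁻¹ * h 3)
      field_simp at b2
      rw [hρ2] at b2
      have hεT : ε * 1 ≤ ε * T := mul_le_mul_of_nonneg_left hT hε.le
      linarith [b0, b1, b2, b3, hεT]
    · exact ⟨rfl, rfl⟩
  · -- π_RU
    intro ρ h hP hB hnorm
    have p0 := congrFun hP 0
    have p1 := congrFun hP 1
    have p2 := congrFun hP 2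
    have p3 := congrFun hP 3
    have b0 := congrFun hB 0
    have b1 := congrFun hB 1
    have b2 := congrFun hB 2
    have b3 := congrFun hB 3
    simp [Pmat, rvec, mulVec, dotProduct, Fin.sum_univ_four] at p0 p1 p2 p3 b0 b1 b2 b3
    field_simp at p2 p3 b2 b3
    -- derive ρ constant (1+ε)/2
    have hρ23 : ρ 3 = ρ 2 := by linarith
    rw [hρ23] at b3
    have hc : ρ 2 = (1 + ε) / 2 := by
      have key : (2 * ρ 2) * T = (1 + ε) * T := by linarith
      have := mul_right_cancel₀ hT0 key
      linarith
    have hρ0 : ρ 0 = (1 + ε) / 2 := by rw [← p0]; exact hc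
    have hρ1 : ρ 1 = (1 + ε) / 2 := by rw [← p1]; exact hρ0
    have hρ3 : ρ 3 = (1 + ε) / 2 := by rw [hρ23]; exact hc
    rw [hc] at b2
    have hd : h 3 - h 2 = ε * T / 2 := by linarith
    have h3v : h 3 = ε * T / 4 := by linarith
    have h2v : h 2 = -(ε * T) / 4 := by linarith
    have h0v : h 0 = -(ε * T) / 4 - (1 + ε) / 2 := by
      have := b0; rw [hρ0, h2v] at this; linarith
    have h1v : h 1 = -(ε * T) / 4 - (1 + ε) / 2 - ε / 2 := by
      have := b1; rw [hρ1, h0v] at this; linarith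
    have hεT : ε ≤ ε * T := by nlinarith
    have hεTpos : 0 < ε * T := by positivity
    constructor
    · funext s; rcases hfin s with rfl | rfl | rfl | rfl
      · exact hρ0
      · exact hρ1
      · exact hc
      · exact hρ3
    · rw [span4 h 3 1 (fun s => by rcases hfin s with rfl | rfl | rfl | rfl <;>
          linarith [h0v, h1v, h2v, h3v, hεT, hε])
        (fun s => by rcases hfin s with rfl | rfl | rfl | rfl <;>
          linarith [h0v, h1v, h2v, h3v, hεT, hε])]
      rw [h3v, h1v]; ring
  · -- π_DL
    intro ρ h hP hB hnorm
    have p0 := congrFun hP 0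
    have p2 := congrFun hP 2
    have p3 := congrFun hP 3
    have b0 := congrFun hB 0
    have b1 := congrFun hB 1
    have b2 := congrFun hB 2
    have b3 := congrFun hB 3
    simp [Pmat, rvec, mulVec, dotProduct, Fin.sum_univ_four] at p0 p2 p3 b0 b1 b2 b3
    field_simp at p2 b2
    -- ρ 0 = ρ 1 from p0; b0,b1 give 2ρ0 = 1
    have hc0 : ρ 0 = 1 / 2 := by linarith
    have hρ1 : ρ 1 = 1 / 2 := by linarith
    have hρ3 : ρ 3 = 1 / 2 := by rw [← p3]; exact hρ1
    have hρ2 : ρ 2 = 1 / 2 := by linarith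
    have h0v : h 0 = 0 := by linarith
    have h1v : h 1 = 0 := by linarith
    have h3v : h 3 = -(1/2) := by
      have := b3; rw [hρ3, h1v] at this; linarith
    rw [hρ2] at b2
    have h2v : h 2 = -(1/2) := by linarith
    constructor
    · funext s; rcases hfin s with rfl | rfl | rfl | rfl <;> linarith
    · rw [span4 h 0 2 (fun s => by rcases hfin s with rfl | rfl | rfl | rfl <;>
          linarith [h0v, h1v, h2v, h3v])
        (fun s => by rcases hfin s with rfl | rfl | rfl | rfl <;>
          linarith [h0v, h1v, h2v, h3v])]
      rw [h0v, h2v]; ring
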